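/- The edge connectivity of the n-dimensional bubble-sort star graph BS_n equals 2n − 3 for n ≥ 3. -/

import Mathlib

open SimpleGraph

/-- Adjacency relation of the bubble-sort star graph: `y` is obtained from `x` by
swapping the symbols at positions `i` and `j` (0-indexed), where either `j = i+1`
(an adjacent transposition, i.e. positions `k-1, k` for `k ∈ [2,n]`) or `i = 0`
(a star transposition, i.e. positions `1, k` for `k ∈ [2,n]`). -/
def BSRel (n : ℕ) (x y : Equiv.Perm (Fin n)) : Prop :=
  ∃ i j : Fin n, (j.val = i.val + 1 ∨ i.val = 0) ∧ i ≠ j ∧ y = x * Equiv.swap i j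

/-- The n-dimensional bubble-sort star graph `BS_n` on the permutations of `{1,…,n}`. -/
def BS (n : ℕ) : SimpleGraph (Equiv.Perm (Fin n)) :=
  SimpleGraph.fromRel (BSRel n)

/-- The degree of a vertex, as the cardinality of its neighbour set. -/
noncomputable def deg {V : Type*} (G : SimpleGraph V) (v : V) : ℕ :=
  (G.neighborSet v).ncard

/-- `G` contains `m` pairwise edge-disjoint paths joining `u` and `v`. -/
def HasEdgeDisjointPaths {V : Type*} (G : SimpleGraph V) (u v : V) (m : ℕ) : Prop :=
  ∃ P : Fin m → G.Path u v, ∀ i j : Fin m, i ≠ j →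
    List.Disjoint ((P i : G.Walk u v).edges) ((P j : G.Walk u v).edges)

/-- The edge connectivity of a graph: the minimum size of a set of edges whose
removal disconnects the graph. -/
noncomputable def edgeConnectivity {V : Type*} (G : SimpleGraph V) : ℕ :=
  sInf {k : ℕ | ∃ F : Set (Sym2 V), F ⊆ G.edgeSet ∧ F.ncard = k ∧
    ¬ (G.deleteEdges F).Connected}

set_option linter.unnecessarySeqFocus false

open Equiv

/-- The generator set. -/
def Gens (n : ℕ) : Set (Equiv.Perm (Fin n)) :=
  {g | ∃ i j : Fin n, (j.val = i.val + 1 ∨ i.val = 0) ∧ i ≠ j ∧ g = Equiv.swap i j}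

lemma gens_isSwap {n : ℕ} {g : Equiv.Perm (Fin n)} (hg : g ∈ Gens n) :
    ∃ i j : Fin n, i ≠ j ∧ g = Equiv.swap i j := by
  obtain ⟨i, j, _, hij, rfl⟩ := hg; exact ⟨i, j, hij, rfl⟩

lemma gens_sq {n : ℕ} {g : Equiv.Perm (Fin n)} (hg : g ∈ Gens n) : g * g = 1 := by
  obtain ⟨i, j, _, rfl⟩ := gens_isSwap hg; exact Equiv.swap_mul_self i j

lemma gens_sign {n : ℕ} {g : Equiv.Perm (Fin n)} (hg : g ∈ Gens n) :
    Equiv.Perm.sign g = -1 := by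
  obtain ⟨i, j, hij, rfl⟩ := gens_isSwap hg; exact Equiv.Perm.sign_swap hij

lemma gens_ne_one {n : ℕ} {g : Equiv.Perm (Fin n)} (hg : g ∈ Gens n) : g ≠ 1 := by
  intro h
  have := gens_sign hg
  rw [h] at this
  simp at this

lemma BS_adj {n : ℕ} {x y : Equiv.Perm (Fin n)} :
    (BS n).Adj x y ↔ ∃ g ∈ Gens n, y = x * g := by
  constructor
  · rintro ⟨hne, h | h⟩
    · obtain ⟨i, j, hc, hij, rfl⟩ := h
      exact ⟨_, ⟨i, j, hc, hij, rfl⟩, rfl⟩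
    · obtain ⟨i, j, hc, hij, hx⟩ := h
      refine ⟨_, ⟨i, j, hc, hij, rfl⟩, ?_⟩
      rw [hx, mul_assoc, Equiv.swap_mul_self, mul_one]
  · rintro ⟨g, hg, rfl⟩
    refine ⟨?_, Or.inl ?_⟩
    · intro h
      exact gens_ne_one hg (by simpa using h.symm)
    · obtain ⟨i, j, hc, hij, rfl⟩ := hg
      exact ⟨i, j, hc, hij, rfl⟩

lemma BS_adj_mul {n : ℕ} {g : Equiv.Perm (Fin n)} (hg : g ∈ Gens n)
    (x : Equiv.Perm (Fin n)) : (BS n).Adj x (x * g) :=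
  BS_adj.mpr ⟨g, hg, rfl⟩

open Equiv


lemma sharing_ids {n : ℕ} (x p q : Fin n) (hpx : p ≠ x) (hqx : q ≠ x) (hpq : p ≠ q) :
    swap x q * (swap x p * swap x q) = swap x p * (swap x q * swap x p) ∧
    swap x q * (swap x p * (swap x q * (swap x p * (swap x q * swap x p)))) = 1 := by
  set s := swap x p with hs
  set t := swap x q with ht
  have hts : t * s * t⁻¹ = swap q p := by
    rw [← Equiv.swap_apply_apply]
    congr 1
    · rw [ht, swap_apply_left]
    · rw [ht, swap_apply_of_ne_of_ne hpx hpq]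
  have hst : s * t * s⁻¹ = swap p q := by
    rw [← Equiv.swap_apply_apply]
    congr 1
    · rw [hs, swap_apply_left]
    · rw [hs, swap_apply_of_ne_of_ne hqx (Ne.symm hpq)]
  have htinv : t⁻¹ = t := by rw [ht, swap_inv]
  have hsinv : s⁻¹ = s := by rw [hs, swap_inv]
  rw [htinv] at hts
  rw [hsinv] at hst
  have h1 : t * (s * t) = s * (t * s) := by
    have : swap q p = swap p q := swap_comm q p
    rw [← mul_assoc, hts, this, ← hst, mul_assoc]
  refine ⟨h1, ?_⟩
  have : t * (s * (t * (s * (t * s)))) = (t * s * t) * (s * t * s) := by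
    simp only [mul_assoc]
  rw [this, hts, hst, swap_comm q p, swap_mul_self]

/-- Structural lemma: two distinct generators that do not commute
    (signalled by `s*(t*s) ∉ Gens`) satisfy the braid/cube identities. -/
lemma noncomm_ids {n : ℕ} {s t : Equiv.Perm (Fin n)}
    (a b c d : Fin n) (hab : a ≠ b) (hcd : c ≠ d)
    (hs : s = swap a b) (ht : t = swap c d) (hts : t ≠ s)
    (hmem : s * (t * s) ≠ t) :
    t * (s * t) = s * (t * s) ∧ t * (s * (t * (s * (t * s)))) = 1 := by
  by_cases hac : a = c
  · subst hac
    have hbd : b ≠ d := fun h => hts (by rw [ht, hs, h])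
    rw [hs, ht]
    exact sharing_ids a b d hab.symm hcd.symm hbd
  by_cases had : a = d
  · subst had
    have ht' : t = swap a c := by rw [ht, swap_comm]
    have hbc : b ≠ c := fun h => hts (by rw [ht', hs, h, swap_comm])
    rw [hs, ht']
    exact sharing_ids a b c hab.symm (Ne.symm hac) hbc
  by_cases hbc : b = c
  · subst hbc
    have hs' : s = swap b a := by rw [hs, swap_comm]
    have had' : a ≠ d := fun h => hts (by rw [ht, hs', h, swap_comm])
    rw [hs', ht]
    exact sharing_ids b a d hab (Ne.symm hcd) had'
  by_cases hbd : b = d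
  · subst hbd
    have hs' : s = swap b a := by rw [hs, swap_comm]
    have ht' : t = swap b c := by rw [ht, swap_comm]
    have hac' : a ≠ c := fun h => hts (by rw [ht', hs', h])
    rw [hs', ht']
    exact sharing_ids b a c hab (fun h => hcd (h.symm ▸ rfl)) hac'
  · -- disjoint case: contradiction with hmem
    exfalso
    apply hmem
    have : s * t * s⁻¹ = swap (s c) (s d) := by
      rw [ht]; exact (Equiv.swap_apply_apply s c d).symm
    have hsc : s c = c := by
      rw [hs]; exact swap_apply_of_ne_of_ne (Ne.symm hac) (Ne.symm hbc)
    have hsd : s d = d := by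
      rw [hs]; exact swap_apply_of_ne_of_ne (Ne.symm had) (Ne.symm hbd)
    have hsinv : s⁻¹ = s := by rw [hs, swap_inv]
    rw [hsinv, hsc, hsd, ← ht] at this
    rw [← mul_assoc, this]

lemma hex_ids {n : ℕ} {s t : Equiv.Perm (Fin n)} (hs : s ∈ Gens n) (ht : t ∈ Gens n)
    (hts : t ≠ s) (hB : s * (t * s) ∉ Gens n) :
    t * (s * t) = s * (t * s) ∧ t * (s * (t * s)) = s * t := by
  obtain ⟨a, b, hab, hsd⟩ := gens_isSwap hs
  obtain ⟨c, d, hcd, htd⟩ := gens_isSwap ht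
  have hmem : s * (t * s) ≠ t := fun h => hB (by rw [h]; exact ht)
  obtain ⟨id1, -⟩ := noncomm_ids a b c d hab hcd hsd htd hts hmem
  refine ⟨id1, ?_⟩
  have h2 := congrArg (· * s) id1
  simp only [mul_assoc] at h2
  rw [gens_sq hs, mul_one] at h2
  exact h2

open SimpleGraph

/-- edge list of the direct walk -/
def eS {n : ℕ} (u s : Equiv.Perm (Fin n)) : List (Sym2 (Equiv.Perm (Fin n))) :=
  [s(u * 1, u * s)]

/-- edge list of the short walk through t -/
def eA {n : ℕ} (u s t : Equiv.Perm (Fin n)) : List (Sym2 (Equiv.Perm (Fin n))) :=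
  [s(u * 1, u * t), s(u * t, u * (t * s)), s(u * (t * s), u * s)]

/-- edge list of the long (hexagon) walk through t -/
def eB {n : ℕ} (u s t : Equiv.Perm (Fin n)) : List (Sym2 (Equiv.Perm (Fin n))) :=
  [s(u * 1, u * t), s(u * t, u * (t * s)), s(u * (t * s), u * (t * (s * t))),
   s(u * (t * (s * t)), u * (s * t)), s(u * (s * t), u * s)]

def wS {n : ℕ} (u s : Equiv.Perm (Fin n)) (hs : s ∈ Gens n) : (BS n).Walk u (u * s) :=
  Walk.cons (BS_adj_mul hs u) Walk.nil

lemma wS_edges {n : ℕ} (u s : Equiv.Perm (Fin n)) (hs : s ∈ Gens n) :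
    (wS u s hs).edges = eS u s := by
  simp [wS, eS]

lemma wA_key {n : ℕ} (u s t : Equiv.Perm (Fin n)) (hss : s * s = 1) (htt : t * t = 1) :
    u * t * s * (s * (t * s)) = u * s := by
  simp only [mul_assoc]
  rw [show s * (s * (t * s)) = t * s by rw [← mul_assoc, hss, one_mul],
    show t * (t * s) = s by rw [← mul_assoc, htt, one_mul]]

def wA {n : ℕ} (u s t : Equiv.Perm (Fin n)) (hs : s ∈ Gens n) (ht : t ∈ Gens n)
    (hA : s * (t * s) ∈ Gens n) : (BS n).Walk u (u * s) :=
  Walk.cons (BS_adj_mul ht u) <|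
  Walk.cons (BS_adj_mul hs (u * t)) <|
  Walk.cons (wA_key u s t (gens_sq hs) (gens_sq ht) ▸ BS_adj_mul hA (u * t * s))
  Walk.nil

lemma wA_edges {n : ℕ} (u s t : Equiv.Perm (Fin n)) (hs : s ∈ Gens n) (ht : t ∈ Gens n)
    (hA : s * (t * s) ∈ Gens n) : (wA u s t hs ht hA).edges = eA u s t := by
  simp [wA, eA, mul_assoc]

lemma wB_key1 {n : ℕ} (u s t : Equiv.Perm (Fin n)) (id2 : t * (s * (t * s)) = s * t) :
    u * t * s * t * s = u * (s * t) := by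
  simp only [mul_assoc]
  rw [id2]

lemma wB_key2 {n : ℕ} (u s t : Equiv.Perm (Fin n)) (htt : t * t = 1) :
    u * (s * t) * t = u * s := by
  simp only [mul_assoc]
  rw [show t * t = 1 from htt, mul_one]

def wB {n : ℕ} (u s t : Equiv.Perm (Fin n)) (hs : s ∈ Gens n) (ht : t ∈ Gens n)
    (id2 : t * (s * (t * s)) = s * t) : (BS n).Walk u (u * s) :=
  Walk.cons (BS_adj_mul ht u) <|
  Walk.cons (BS_adj_mul hs (u * t)) <|
  Walk.cons (BS_adj_mul ht (u * t * s)) <|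
  Walk.cons (wB_key1 u s t id2 ▸ BS_adj_mul hs (u * t * s * t)) <|
  Walk.cons (wB_key2 u s t (gens_sq ht) ▸ BS_adj_mul ht (u * (s * t)))
  Walk.nil

lemma wB_edges {n : ℕ} (u s t : Equiv.Perm (Fin n)) (hs : s ∈ Gens n) (ht : t ∈ Gens n)
    (id2 : t * (s * (t * s)) = s * t) : (wB u s t hs ht id2).edges = eB u s t := by
  simp [wB, eB, mul_assoc]

open scoped Classical in
noncomputable def fam {n : ℕ} (u s g : Equiv.Perm (Fin n)) (hs : s ∈ Gens n)
    (hg : g ∈ Gens n) : (BS n).Walk u (u * s) :=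
  if hgs : g = s then wS u s hs
  else if hA : s * (g * s) ∈ Gens n then wA u s g hs hg hA
  else wB u s g hs hg (hex_ids hs hg hgs hA).2

lemma ne_of_sign {n : ℕ} {a b : Equiv.Perm (Fin n)}
    (h : Equiv.Perm.sign a ≠ Equiv.Perm.sign b) : a ≠ b := fun hab => h (by rw [hab])

lemma one_ne_mul_right {G : Type*} [Group G] {s t : G} (hss : s * s = 1) (hts : t ≠ s) :
    (1 : G) ≠ t * s := by
  intro e
  apply hts
  calc t = t * (s * s) := by rw [hss, mul_one]
  _ = t * s * s := by rw [mul_assoc]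
  _ = 1 * s := by rw [← e]
  _ = s := one_mul s

lemma one_ne_mul_left {G : Type*} [Group G] {s t : G} (hss : s * s = 1) (hts : t ≠ s) :
    (1 : G) ≠ s * t := by
  intro e
  apply hts
  calc t = s * s * t := by rw [hss, one_mul]
  _ = s * (s * t) := by rw [mul_assoc]
  _ = s * 1 := by rw [← e]
  _ = s := mul_one s
lemma disjSA {n : ℕ} (u : Equiv.Perm (Fin n)) {s t : Equiv.Perm (Fin n)} (hs : s ∈ Gens n) (ht : t ∈ Gens n) (hts : t ≠ s) :
    List.Disjoint (eS u s) (eA u s t) := by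
  have sgs : Equiv.Perm.sign s = -1 := gens_sign hs
  have sgt : Equiv.Perm.sign t = -1 := gens_sign ht
  have hss : s * s = 1 := gens_sq hs
  have k1 : (s : Equiv.Perm (Fin n)) ≠ t :=
    fun h => hts h.symm
  have k2 : (1 : Equiv.Perm (Fin n)) ≠ t :=
    fun h => gens_ne_one ht h.symm
  have k3 : (s : Equiv.Perm (Fin n)) ≠ 1 :=
    gens_ne_one hs
  have k4 : (s : Equiv.Perm (Fin n)) ≠ t * s :=
    fun h => gens_ne_one ht (mul_eq_right.mp h.symm)
  have k5 : (1 : Equiv.Perm (Fin n)) ≠ t * s :=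
    one_ne_mul_right hss hts
  have k6 : (1 : Equiv.Perm (Fin n)) ≠ s :=
    fun h => gens_ne_one hs h.symm
  intro e he1 he2
  simp only [eS, eA, eB, List.mem_cons, List.mem_singleton, List.not_mem_nil, or_false] at he1 he2
  rcases he1 with rfl <;> rcases he2 with h|h|h <;>
    rcases Sym2.eq_iff.mp h with ⟨h1, h2⟩ | ⟨h1, h2⟩ <;>
      first
        | exact absurd (mul_left_cancel h1) (by assumption)
        | exact absurd (mul_left_cancel h2) (by assumption)

lemma disjSB {n : ℕ} (u : Equiv.Perm (Fin n)) {s t : Equiv.Perm (Fin n)} (hs : s ∈ Gens n) (ht : t ∈ Gens n) (hts : t ≠ s) :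
    List.Disjoint (eS u s) (eB u s t) := by
  have sgs : Equiv.Perm.sign s = -1 := gens_sign hs
  have sgt : Equiv.Perm.sign t = -1 := gens_sign ht
  have hss : s * s = 1 := gens_sq hs
  have k1 : (s : Equiv.Perm (Fin n)) ≠ t :=
    fun h => hts h.symm
  have k2 : (1 : Equiv.Perm (Fin n)) ≠ t :=
    fun h => gens_ne_one ht h.symm
  have k3 : (s : Equiv.Perm (Fin n)) ≠ 1 :=
    gens_ne_one hs
  have k4 : (s : Equiv.Perm (Fin n)) ≠ t * s :=
    fun h => gens_ne_one ht (mul_eq_right.mp h.symm)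
  have k5 : (1 : Equiv.Perm (Fin n)) ≠ t * s :=
    one_ne_mul_right hss hts
  have k6 : (1 : Equiv.Perm (Fin n)) ≠ t * (s * t) :=
    ne_of_sign (by simp only [map_one, map_mul, sgs, sgt]; decide)
  have k7 : (s : Equiv.Perm (Fin n)) ≠ s * t :=
    fun h => gens_ne_one ht (mul_eq_left.mp h.symm)
  have k8 : (1 : Equiv.Perm (Fin n)) ≠ s * t :=
    one_ne_mul_left hss hts
  have k9 : (1 : Equiv.Perm (Fin n)) ≠ s :=
    fun h => gens_ne_one hs h.symm
  intro e he1 he2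
  simp only [eS, eA, eB, List.mem_cons, List.mem_singleton, List.not_mem_nil, or_false] at he1 he2
  rcases he1 with rfl <;> rcases he2 with h|h|h|h|h <;>
    rcases Sym2.eq_iff.mp h with ⟨h1, h2⟩ | ⟨h1, h2⟩ <;>
      first
        | exact absurd (mul_left_cancel h1) (by assumption)
        | exact absurd (mul_left_cancel h2) (by assumption)

lemma disjAA {n : ℕ} (u : Equiv.Perm (Fin n)) {s t t' : Equiv.Perm (Fin n)} (hs : s ∈ Gens n) (ht : t ∈ Gens n) (ht' : t' ∈ Gens n)
    (hts : t ≠ s) (ht's : t' ≠ s) (htne : t ≠ t') :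
    List.Disjoint (eA u s t) (eA u s t') := by
  have sgs : Equiv.Perm.sign s = -1 := gens_sign hs
  have sgt : Equiv.Perm.sign t = -1 := gens_sign ht
  have sgt' : Equiv.Perm.sign t' = -1 := gens_sign ht'
  have hss : s * s = 1 := gens_sq hs
  have k1 : (t : Equiv.Perm (Fin n)) ≠ t' :=
    htne
  have k2 : (1 : Equiv.Perm (Fin n)) ≠ t' :=
    fun h => gens_ne_one ht' h.symm
  have k3 : (t : Equiv.Perm (Fin n)) ≠ 1 :=
    gens_ne_one ht
  have k4 : (t : Equiv.Perm (Fin n)) ≠ t' * s :=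
    ne_of_sign (by simp only [map_one, map_mul, sgs, sgt, sgt']; decide)
  have k5 : (1 : Equiv.Perm (Fin n)) ≠ t' * s :=
    one_ne_mul_right hss ht's
  have k6 : (t : Equiv.Perm (Fin n)) ≠ s :=
    hts
  have k7 : (1 : Equiv.Perm (Fin n)) ≠ s :=
    fun h => gens_ne_one hs h.symm
  have k8 : (t * s : Equiv.Perm (Fin n)) ≠ t' :=
    ne_of_sign (by simp only [map_one, map_mul, sgs, sgt, sgt']; decide)
  have k9 : (t * s : Equiv.Perm (Fin n)) ≠ 1 :=
    fun h => one_ne_mul_right hss hts h.symm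
  have k10 : (t * s : Equiv.Perm (Fin n)) ≠ t' * s :=
    fun h => htne (mul_right_cancel h)
  have k11 : (t * s : Equiv.Perm (Fin n)) ≠ s :=
    fun h => gens_ne_one ht (mul_eq_right.mp h)
  have k12 : (s : Equiv.Perm (Fin n)) ≠ t' :=
    fun h => ht's h.symm
  have k13 : (s : Equiv.Perm (Fin n)) ≠ 1 :=
    gens_ne_one hs
  have k14 : (s : Equiv.Perm (Fin n)) ≠ t' * s :=
    fun h => gens_ne_one ht' (mul_eq_right.mp h.symm)
  intro e he1 he2
  simp only [eS, eA, eB, List.mem_cons, List.mem_singleton, List.not_mem_nil, or_false] at he1 he2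
  rcases he1 with rfl|rfl|rfl <;> rcases he2 with h|h|h <;>
    rcases Sym2.eq_iff.mp h with ⟨h1, h2⟩ | ⟨h1, h2⟩ <;>
      first
        | exact absurd (mul_left_cancel h1) (by assumption)
        | exact absurd (mul_left_cancel h2) (by assumption)

lemma disjAB {n : ℕ} (u : Equiv.Perm (Fin n)) {s t t' : Equiv.Perm (Fin n)} (hs : s ∈ Gens n) (ht : t ∈ Gens n) (ht' : t' ∈ Gens n)
    (hts : t ≠ s) (ht's : t' ≠ s) (htne : t ≠ t')
    (HBt' : s * (t' * s) ∉ Gens n) (id1t' : t' * (s * t') = s * (t' * s)) :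
    List.Disjoint (eA u s t) (eB u s t') := by
  have sgs : Equiv.Perm.sign s = -1 := gens_sign hs
  have sgt : Equiv.Perm.sign t = -1 := gens_sign ht
  have sgt' : Equiv.Perm.sign t' = -1 := gens_sign ht'
  have hss : s * s = 1 := gens_sq hs
  have k1 : (t : Equiv.Perm (Fin n)) ≠ t' :=
    htne
  have k2 : (1 : Equiv.Perm (Fin n)) ≠ t' :=
    fun h => gens_ne_one ht' h.symm
  have k3 : (t : Equiv.Perm (Fin n)) ≠ 1 :=
    gens_ne_one ht
  have k4 : (t : Equiv.Perm (Fin n)) ≠ t' * s :=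
    ne_of_sign (by simp only [map_one, map_mul, sgs, sgt, sgt']; decide)
  have k5 : (1 : Equiv.Perm (Fin n)) ≠ t' * s :=
    one_ne_mul_right hss ht's
  have k6 : (t : Equiv.Perm (Fin n)) ≠ t' * (s * t') :=
    fun h => HBt' (by rw [← id1t', ← h]; exact ht)
  have k7 : (1 : Equiv.Perm (Fin n)) ≠ t' * (s * t') :=
    ne_of_sign (by simp only [map_one, map_mul, sgs, sgt, sgt']; decide)
  have k8 : (t : Equiv.Perm (Fin n)) ≠ s * t' :=
    ne_of_sign (by simp only [map_one, map_mul, sgs, sgt, sgt']; decide)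
  have k9 : (1 : Equiv.Perm (Fin n)) ≠ s * t' :=
    one_ne_mul_left hss ht's
  have k10 : (t : Equiv.Perm (Fin n)) ≠ s :=
    hts
  have k11 : (1 : Equiv.Perm (Fin n)) ≠ s :=
    fun h => gens_ne_one hs h.symm
  have k12 : (t * s : Equiv.Perm (Fin n)) ≠ t' :=
    ne_of_sign (by simp only [map_one, map_mul, sgs, sgt, sgt']; decide)
  have k13 : (t * s : Equiv.Perm (Fin n)) ≠ 1 :=
    fun h => one_ne_mul_right hss hts h.symm
  have k14 : (t * s : Equiv.Perm (Fin n)) ≠ t' * s :=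
    fun h => htne (mul_right_cancel h)
  have k15 : (t * s : Equiv.Perm (Fin n)) ≠ t' * (s * t') :=
    ne_of_sign (by simp only [map_one, map_mul, sgs, sgt, sgt']; decide)
  have k16 : (t * s : Equiv.Perm (Fin n)) ≠ s * t' :=
    fun h => HBt' (by
      have e : t = s * (t' * s) := by
        calc t = t * (s * s) := by rw [hss, mul_one]
        _ = t * s * s := by rw [mul_assoc]
        _ = s * t' * s := by rw [h]
        _ = s * (t' * s) := by rw [mul_assoc]
      rw [← e]; exact ht)
  have k17 : (t * s : Equiv.Perm (Fin n)) ≠ s :=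
    fun h => gens_ne_one ht (mul_eq_right.mp h)
  have k18 : (s : Equiv.Perm (Fin n)) ≠ t' :=
    fun h => ht's h.symm
  have k19 : (s : Equiv.Perm (Fin n)) ≠ 1 :=
    gens_ne_one hs
  have k20 : (s : Equiv.Perm (Fin n)) ≠ t' * s :=
    fun h => gens_ne_one ht' (mul_eq_right.mp h.symm)
  have k21 : (s : Equiv.Perm (Fin n)) ≠ t' * (s * t') :=
    fun h => HBt' (by rw [← id1t', ← h]; exact hs)
  have k22 : (s : Equiv.Perm (Fin n)) ≠ s * t' :=
    fun h => gens_ne_one ht' (mul_eq_left.mp h.symm)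
  intro e he1 he2
  simp only [eS, eA, eB, List.mem_cons, List.mem_singleton, List.not_mem_nil, or_false] at he1 he2
  rcases he1 with rfl|rfl|rfl <;> rcases he2 with h|h|h|h|h <;>
    rcases Sym2.eq_iff.mp h with ⟨h1, h2⟩ | ⟨h1, h2⟩ <;>
      first
        | exact absurd (mul_left_cancel h1) (by assumption)
        | exact absurd (mul_left_cancel h2) (by assumption)

lemma disjBA {n : ℕ} (u : Equiv.Perm (Fin n)) {s t t' : Equiv.Perm (Fin n)} (hs : s ∈ Gens n) (ht : t ∈ Gens n) (ht' : t' ∈ Gens n)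
    (hts : t ≠ s) (ht's : t' ≠ s) (htne : t ≠ t')
    (HBt : s * (t * s) ∉ Gens n) (id1t : t * (s * t) = s * (t * s)) :
    List.Disjoint (eB u s t) (eA u s t') := by
  have sgs : Equiv.Perm.sign s = -1 := gens_sign hs
  have sgt : Equiv.Perm.sign t = -1 := gens_sign ht
  have sgt' : Equiv.Perm.sign t' = -1 := gens_sign ht'
  have hss : s * s = 1 := gens_sq hs
  have k1 : (t : Equiv.Perm (Fin n)) ≠ t' :=
    htne
  have k2 : (1 : Equiv.Perm (Fin n)) ≠ t' :=
    fun h => gens_ne_one ht' h.symm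
  have k3 : (t : Equiv.Perm (Fin n)) ≠ 1 :=
    gens_ne_one ht
  have k4 : (t : Equiv.Perm (Fin n)) ≠ t' * s :=
    ne_of_sign (by simp only [map_one, map_mul, sgs, sgt, sgt']; decide)
  have k5 : (1 : Equiv.Perm (Fin n)) ≠ t' * s :=
    one_ne_mul_right hss ht's
  have k6 : (t : Equiv.Perm (Fin n)) ≠ s :=
    hts
  have k7 : (1 : Equiv.Perm (Fin n)) ≠ s :=
    fun h => gens_ne_one hs h.symm
  have k8 : (t * s : Equiv.Perm (Fin n)) ≠ t' :=
    ne_of_sign (by simp only [map_one, map_mul, sgs, sgt, sgt']; decide)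
  have k9 : (t * s : Equiv.Perm (Fin n)) ≠ 1 :=
    fun h => one_ne_mul_right hss hts h.symm
  have k10 : (t * s : Equiv.Perm (Fin n)) ≠ t' * s :=
    fun h => htne (mul_right_cancel h)
  have k11 : (t * s : Equiv.Perm (Fin n)) ≠ s :=
    fun h => gens_ne_one ht (mul_eq_right.mp h)
  have k12 : (t * (s * t) : Equiv.Perm (Fin n)) ≠ t' :=
    fun h => HBt (by rw [← id1t, h]; exact ht')
  have k13 : (t * (s * t) : Equiv.Perm (Fin n)) ≠ 1 :=
    ne_of_sign (by simp only [map_one, map_mul, sgs, sgt, sgt']; decide)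
  have k14 : (t * (s * t) : Equiv.Perm (Fin n)) ≠ t' * s :=
    ne_of_sign (by simp only [map_one, map_mul, sgs, sgt, sgt']; decide)
  have k15 : (t * (s * t) : Equiv.Perm (Fin n)) ≠ s :=
    fun h => HBt (by rw [← id1t, h]; exact hs)
  have k16 : (s * t : Equiv.Perm (Fin n)) ≠ t' :=
    ne_of_sign (by simp only [map_one, map_mul, sgs, sgt, sgt']; decide)
  have k17 : (s * t : Equiv.Perm (Fin n)) ≠ 1 :=
    fun h => one_ne_mul_left hss hts h.symm
  have k18 : (s * t : Equiv.Perm (Fin n)) ≠ t' * s :=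
    fun h => HBt (by
      have e : s * (t * s) = t' := by
        calc s * (t * s) = s * t * s := by rw [← mul_assoc]
        _ = t' * s * s := by rw [h]
        _ = t' * (s * s) := by rw [mul_assoc]
        _ = t' := by rw [hss, mul_one]
      rw [e]; exact ht')
  have k19 : (s * t : Equiv.Perm (Fin n)) ≠ s :=
    fun h => gens_ne_one ht (mul_eq_left.mp h)
  have k20 : (s : Equiv.Perm (Fin n)) ≠ t' :=
    fun h => ht's h.symm
  have k21 : (s : Equiv.Perm (Fin n)) ≠ 1 :=
    gens_ne_one hs
  have k22 : (s : Equiv.Perm (Fin n)) ≠ t' * s :=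
    fun h => gens_ne_one ht' (mul_eq_right.mp h.symm)
  intro e he1 he2
  simp only [eS, eA, eB, List.mem_cons, List.mem_singleton, List.not_mem_nil, or_false] at he1 he2
  rcases he1 with rfl|rfl|rfl|rfl|rfl <;> rcases he2 with h|h|h <;>
    rcases Sym2.eq_iff.mp h with ⟨h1, h2⟩ | ⟨h1, h2⟩ <;>
      first
        | exact absurd (mul_left_cancel h1) (by assumption)
        | exact absurd (mul_left_cancel h2) (by assumption)

lemma disjBB {n : ℕ} (u : Equiv.Perm (Fin n)) {s t t' : Equiv.Perm (Fin n)} (hs : s ∈ Gens n) (ht : t ∈ Gens n) (ht' : t' ∈ Gens n)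
    (hts : t ≠ s) (ht's : t' ≠ s) (htne : t ≠ t')
    (HBt : s * (t * s) ∉ Gens n) (id1t : t * (s * t) = s * (t * s))
    (HBt' : s * (t' * s) ∉ Gens n) (id1t' : t' * (s * t') = s * (t' * s)) :
    List.Disjoint (eB u s t) (eB u s t') := by
  have sgs : Equiv.Perm.sign s = -1 := gens_sign hs
  have sgt : Equiv.Perm.sign t = -1 := gens_sign ht
  have sgt' : Equiv.Perm.sign t' = -1 := gens_sign ht'
  have hss : s * s = 1 := gens_sq hs
  have k1 : (t : Equiv.Perm (Fin n)) ≠ t' :=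
    htne
  have k2 : (1 : Equiv.Perm (Fin n)) ≠ t' :=
    fun h => gens_ne_one ht' h.symm
  have k3 : (t : Equiv.Perm (Fin n)) ≠ 1 :=
    gens_ne_one ht
  have k4 : (t : Equiv.Perm (Fin n)) ≠ t' * s :=
    ne_of_sign (by simp only [map_one, map_mul, sgs, sgt, sgt']; decide)
  have k5 : (1 : Equiv.Perm (Fin n)) ≠ t' * s :=
    one_ne_mul_right hss ht's
  have k6 : (t : Equiv.Perm (Fin n)) ≠ t' * (s * t') :=
    fun h => HBt' (by rw [← id1t', ← h]; exact ht)
  have k7 : (1 : Equiv.Perm (Fin n)) ≠ t' * (s * t') :=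
    ne_of_sign (by simp only [map_one, map_mul, sgs, sgt, sgt']; decide)
  have k8 : (t : Equiv.Perm (Fin n)) ≠ s * t' :=
    ne_of_sign (by simp only [map_one, map_mul, sgs, sgt, sgt']; decide)
  have k9 : (1 : Equiv.Perm (Fin n)) ≠ s * t' :=
    one_ne_mul_left hss ht's
  have k10 : (t : Equiv.Perm (Fin n)) ≠ s :=
    hts
  have k11 : (1 : Equiv.Perm (Fin n)) ≠ s :=
    fun h => gens_ne_one hs h.symm
  have k12 : (t * s : Equiv.Perm (Fin n)) ≠ t' :=
    ne_of_sign (by simp only [map_one, map_mul, sgs, sgt, sgt']; decide)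
  have k13 : (t * s : Equiv.Perm (Fin n)) ≠ 1 :=
    fun h => one_ne_mul_right hss hts h.symm
  have k14 : (t * s : Equiv.Perm (Fin n)) ≠ t' * s :=
    fun h => htne (mul_right_cancel h)
  have k15 : (t * s : Equiv.Perm (Fin n)) ≠ t' * (s * t') :=
    ne_of_sign (by simp only [map_one, map_mul, sgs, sgt, sgt']; decide)
  have k16 : (t * s : Equiv.Perm (Fin n)) ≠ s * t' :=
    fun h => HBt' (by
      have e : t = s * (t' * s) := by
        calc t = t * (s * s) := by rw [hss, mul_one]
        _ = t * s * s := by rw [mul_assoc]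
        _ = s * t' * s := by rw [h]
        _ = s * (t' * s) := by rw [mul_assoc]
      rw [← e]; exact ht)
  have k17 : (t * s : Equiv.Perm (Fin n)) ≠ s :=
    fun h => gens_ne_one ht (mul_eq_right.mp h)
  have k18 : (t * (s * t) : Equiv.Perm (Fin n)) ≠ t' :=
    fun h => HBt (by rw [← id1t, h]; exact ht')
  have k19 : (t * (s * t) : Equiv.Perm (Fin n)) ≠ 1 :=
    ne_of_sign (by simp only [map_one, map_mul, sgs, sgt, sgt']; decide)
  have k20 : (t * (s * t) : Equiv.Perm (Fin n)) ≠ t' * s :=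
    ne_of_sign (by simp only [map_one, map_mul, sgs, sgt, sgt']; decide)
  have k21 : (t * (s * t) : Equiv.Perm (Fin n)) ≠ t' * (s * t') :=
    fun h => htne (by rw [id1t, id1t'] at h; exact mul_right_cancel (mul_left_cancel h))
  have k22 : (t * (s * t) : Equiv.Perm (Fin n)) ≠ s * t' :=
    ne_of_sign (by simp only [map_one, map_mul, sgs, sgt, sgt']; decide)
  have k23 : (t * (s * t) : Equiv.Perm (Fin n)) ≠ s :=
    fun h => HBt (by rw [← id1t, h]; exact hs)
  have k24 : (s * t : Equiv.Perm (Fin n)) ≠ t' :=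
    ne_of_sign (by simp only [map_one, map_mul, sgs, sgt, sgt']; decide)
  have k25 : (s * t : Equiv.Perm (Fin n)) ≠ 1 :=
    fun h => one_ne_mul_left hss hts h.symm
  have k26 : (s * t : Equiv.Perm (Fin n)) ≠ t' * s :=
    fun h => HBt (by
      have e : s * (t * s) = t' := by
        calc s * (t * s) = s * t * s := by rw [← mul_assoc]
        _ = t' * s * s := by rw [h]
        _ = t' * (s * s) := by rw [mul_assoc]
        _ = t' := by rw [hss, mul_one]
      rw [e]; exact ht')
  have k27 : (s * t : Equiv.Perm (Fin n)) ≠ t' * (s * t') :=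
    ne_of_sign (by simp only [map_one, map_mul, sgs, sgt, sgt']; decide)
  have k28 : (s * t : Equiv.Perm (Fin n)) ≠ s * t' :=
    fun h => htne (mul_left_cancel h)
  have k29 : (s * t : Equiv.Perm (Fin n)) ≠ s :=
    fun h => gens_ne_one ht (mul_eq_left.mp h)
  have k30 : (s : Equiv.Perm (Fin n)) ≠ t' :=
    fun h => ht's h.symm
  have k31 : (s : Equiv.Perm (Fin n)) ≠ 1 :=
    gens_ne_one hs
  have k32 : (s : Equiv.Perm (Fin n)) ≠ t' * s :=
    fun h => gens_ne_one ht' (mul_eq_right.mp h.symm)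
  have k33 : (s : Equiv.Perm (Fin n)) ≠ t' * (s * t') :=
    fun h => HBt' (by rw [← id1t', ← h]; exact hs)
  have k34 : (s : Equiv.Perm (Fin n)) ≠ s * t' :=
    fun h => gens_ne_one ht' (mul_eq_left.mp h.symm)
  intro e he1 he2
  simp only [eS, eA, eB, List.mem_cons, List.mem_singleton, List.not_mem_nil, or_false] at he1 he2
  rcases he1 with rfl|rfl|rfl|rfl|rfl <;> rcases he2 with h|h|h|h|h <;>
    rcases Sym2.eq_iff.mp h with ⟨h1, h2⟩ | ⟨h1, h2⟩ <;>
      first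
        | exact absurd (mul_left_cancel h1) (by assumption)
        | exact absurd (mul_left_cancel h2) (by assumption)

lemma fam_disjoint {n : ℕ} (u s : Equiv.Perm (Fin n)) {g g' : Equiv.Perm (Fin n)}
    (hs : s ∈ Gens n) (hg : g ∈ Gens n) (hg' : g' ∈ Gens n) (hne : g ≠ g') :
    List.Disjoint (fam u s g hs hg).edges (fam u s g' hs hg').edges := by
  unfold fam
  by_cases h1 : g = s
  · rw [dif_pos h1]
    by_cases h2 : g' = s
    · exact absurd (h1.trans h2.symm) hne
    rw [dif_neg h2]
    by_cases h4 : s * (g' * s) ∈ Gens n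
    · rw [dif_pos h4, wS_edges, wA_edges]
      exact disjSA u hs hg' h2
    · rw [dif_neg h4, wS_edges, wB_edges]
      exact disjSB u hs hg' h2
  rw [dif_neg h1]
  by_cases h2 : g' = s
  · rw [dif_pos h2]
    by_cases h3 : s * (g * s) ∈ Gens n
    · rw [dif_pos h3, wS_edges, wA_edges]
      exact (disjSA u hs hg h1).symm
    · rw [dif_neg h3, wS_edges, wB_edges]
      exact (disjSB u hs hg h1).symm
  rw [dif_neg h2]
  by_cases h3 : s * (g * s) ∈ Gens n <;> by_cases h4 : s * (g' * s) ∈ Gens n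
  · rw [dif_pos h3, dif_pos h4, wA_edges, wA_edges]
    exact disjAA u hs hg hg' h1 h2 hne
  · rw [dif_pos h3, dif_neg h4, wA_edges, wB_edges]
    exact disjAB u hs hg hg' h1 h2 hne h4 (hex_ids hs hg' h2 h4).1
  · rw [dif_neg h3, dif_pos h4, wB_edges, wA_edges]
    exact disjBA u hs hg hg' h1 h2 hne h3 (hex_ids hs hg h1 h3).1
  · rw [dif_neg h3, dif_neg h4, wB_edges, wB_edges]
    exact disjBB u hs hg hg' h1 h2 hne h3 (hex_ids hs hg h1 h3).1 h4 (hex_ids hs hg' h2 h4).1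

lemma swap_eq_swap_iff' {α : Type*} [DecidableEq α] {a b c d : α} (hab : a ≠ b) (hcd : c ≠ d)
    (h : Equiv.swap a b = Equiv.swap c d) : (a = c ∧ b = d) ∨ (a = d ∧ b = c) := by
  have hc := DFunLike.congr_fun h c
  rw [Equiv.swap_apply_left] at hc
  by_cases h1 : c = a
  · subst h1
    rw [Equiv.swap_apply_left] at hc
    exact Or.inl ⟨rfl, hc⟩
  by_cases h2 : c = b
  · subst h2
    rw [Equiv.swap_apply_right] at hc
    exact Or.inr ⟨hc, rfl⟩
  · rw [Equiv.swap_apply_of_ne_of_ne h1 h2] at hc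
    exact absurd hc hcd

def GQ (n : ℕ) : Finset (Fin n × Fin n) :=
  Finset.univ.filter (fun p => (p.2.val = p.1.val + 1 ∨ p.1.val = 0) ∧ p.1 ≠ p.2)

lemma GQ_card {n : ℕ} (hn : 3 ≤ n) : (GQ n).card = 2 * n - 3 := by
  classical
  haveI : NeZero n := ⟨by omega⟩
  have hv1 : (1 : Fin n).val = 1 := by
    rw [Fin.val_one']
    exact Nat.mod_eq_of_lt (by omega)
  have h1 : GQ n = (Finset.univ.filter (fun p : Fin n × Fin n => p.2.val = p.1.val + 1)) ∪
      (Finset.univ.filter (fun p : Fin n × Fin n => p.1.val = 0 ∧ p.1 ≠ p.2)) := by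
    ext p
    simp only [GQ, Finset.mem_filter, Finset.mem_union, Finset.mem_univ, true_and]
    constructor
    · rintro ⟨h | h, hne⟩
      · exact Or.inl h
      · exact Or.inr ⟨h, hne⟩
    · rintro (h | ⟨h, hne⟩)
      · exact ⟨Or.inl h, fun e => by rw [e] at h; omega⟩
      · exact ⟨Or.inr h, hne⟩
  have c1 : (Finset.univ.filter (fun p : Fin n × Fin n => p.2.val = p.1.val + 1)).card = n - 1 := by
    rw [← Finset.card_range (n - 1)]
    apply Finset.card_bij (fun (p : Fin n × Fin n) _ => (p.1 : ℕ))
    · intro p hp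
      simp only [Finset.mem_filter, Finset.mem_univ, true_and] at hp
      have := p.2.isLt
      simp only [Finset.mem_range]
      omega
    · intro p hp q hq e
      simp only [Finset.mem_filter, Finset.mem_univ, true_and] at hp hq
      have h2 : (p.2 : ℕ) = (q.2 : ℕ) := by omega
      exact Prod.ext (Fin.ext e) (Fin.ext h2)
    · intro b hb
      simp only [Finset.mem_range] at hb
      refine ⟨(⟨b, by omega⟩, ⟨b + 1, by omega⟩), ?_, rfl⟩
      simp only [Finset.mem_filter, Finset.mem_univ, true_and]
  have c2 : (Finset.univ.filter (fun p : Fin n × Fin n => p.1.val = 0 ∧ p.1 ≠ p.2)).card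
      = n - 1 := by
    have hc : ((Finset.range n).erase 0).card = n - 1 := by
      rw [Finset.card_erase_of_mem (Finset.mem_range.mpr (by omega)), Finset.card_range]
    rw [← hc]
    apply Finset.card_bij (fun (p : Fin n × Fin n) _ => (p.2 : ℕ))
    · intro p hp
      simp only [Finset.mem_filter, Finset.mem_univ, true_and] at hp
      simp only [Finset.mem_erase, Finset.mem_range]
      refine ⟨?_, p.2.isLt⟩
      intro e
      exact hp.2 (Fin.ext (by omega))
    · intro p hp q hq e
      simp only [Finset.mem_filter, Finset.mem_univ, true_and] at hp hq
      exact Prod.ext (Fin.ext (by omega)) (Fin.ext e)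
    · intro b hb
      simp only [Finset.mem_erase, Finset.mem_range] at hb
      refine ⟨(⟨0, by omega⟩, ⟨b, by omega⟩), ?_, rfl⟩
      refine Finset.mem_filter.mpr ⟨Finset.mem_univ _, rfl, fun e => ?_⟩
      have : (0 : ℕ) = b := congrArg Fin.val e
      omega
  have c3 : ((Finset.univ.filter (fun p : Fin n × Fin n => p.2.val = p.1.val + 1)) ∩
      (Finset.univ.filter (fun p : Fin n × Fin n => p.1.val = 0 ∧ p.1 ≠ p.2))).card = 1 := by
    rw [show ((Finset.univ.filter (fun p : Fin n × Fin n => p.2.val = p.1.val + 1)) ∩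
      (Finset.univ.filter (fun p : Fin n × Fin n => p.1.val = 0 ∧ p.1 ≠ p.2)))
      = {((0 : Fin n), (1 : Fin n))} from ?_, Finset.card_singleton]
    ext p
    simp only [Finset.mem_inter, Finset.mem_filter, Finset.mem_univ, true_and,
      Finset.mem_singleton]
    constructor
    · rintro ⟨h1, h2, h3⟩
      have e1 : p.1 = (0 : Fin n) := Fin.ext (by simpa using h2)
      have e2 : p.2 = (1 : Fin n) := Fin.ext (by rw [hv1]; omega)
      rw [← e1, ← e2]
    · rintro rfl
      refine ⟨by rw [show ((0 : Fin n), (1 : Fin n)).2.val = 1 from hv1]; simp, by simp, ?_⟩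
      intro e
      have := congrArg Fin.val e
      rw [hv1] at this
      simp at this
  have := Finset.card_union_add_card_inter
    (Finset.univ.filter (fun p : Fin n × Fin n => p.2.val = p.1.val + 1))
    (Finset.univ.filter (fun p : Fin n × Fin n => p.1.val = 0 ∧ p.1 ≠ p.2))
  rw [c1, c2, c3, ← h1] at this
  omega

lemma Gens_eq_image {n : ℕ} :
    Gens n = ↑((GQ n).image (fun p => Equiv.swap p.1 p.2)) := by
  ext g
  simp only [Gens, GQ, Set.mem_setOf_eq, Finset.coe_image, Set.mem_image, Finset.mem_coe,
    Finset.mem_filter, Finset.mem_univ, true_and]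
  constructor
  · rintro ⟨i, j, hc, hij, rfl⟩
    exact ⟨(i, j), ⟨hc, hij⟩, rfl⟩
  · rintro ⟨⟨i, j⟩, ⟨hc, hij⟩, rfl⟩
    exact ⟨i, j, hc, hij, rfl⟩

lemma Gens_ncard {n : ℕ} (hn : 3 ≤ n) : (Gens n).ncard = 2 * n - 3 := by
  classical
  rw [Gens_eq_image, Set.ncard_coe_finset]
  rw [Finset.card_image_of_injOn, GQ_card hn]
  intro p hp q hq h
  simp only [GQ, Finset.coe_filter, Set.mem_setOf_eq, Finset.mem_univ, true_and] at hp hq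
  rcases swap_eq_swap_iff' hp.2 hq.2 h with ⟨e1, e2⟩ | ⟨e1, e2⟩
  · exact Prod.ext e1 e2
  · exfalso
    have v1 := congrArg Fin.val e1
    have v2 := congrArg Fin.val e2
    rcases hp.1 with h1 | h1 <;> rcases hq.1 with h2 | h2
    · omega
    · omega
    · omega
    · exact hp.2 (Fin.ext (by omega))

def mulHom {n : ℕ} (a : Equiv.Perm (Fin n)) : BS n →g BS n where
  toFun := fun x => a * x
  map_rel' := by
    intro x y h
    rw [BS_adj] at h ⊢
    obtain ⟨g, hg, rfl⟩ := h
    exact ⟨g, hg, (mul_assoc a x g).symm⟩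

lemma BS_reachable_one {n : ℕ} [NeZero n] (f : Equiv.Perm (Fin n)) : (BS n).Reachable 1 f := by
  have key : ∀ a b : Equiv.Perm (Fin n), (BS n).Reachable 1 b →
      (BS n).Reachable a (a * b) := by
    intro a b h
    have h2 := h.map (mulHom a)
    change (BS n).Reachable (a * 1) (a * b) at h2
    simpa using h2
  let R : Subgroup (Equiv.Perm (Fin n)) :=
    { carrier := {f | (BS n).Reachable 1 f}
      one_mem' := SimpleGraph.Reachable.refl 1
      mul_mem' := fun {x y} hx hy => hx.trans (key x y hy)
      inv_mem' := fun {x} hx => by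
        have h2 := key x⁻¹ x hx
        rw [inv_mul_cancel] at h2
        exact h2.symm }
  have hstar : ∀ j : Fin n, j ≠ 0 → Equiv.swap 0 j ∈ R := by
    intro j hj
    have hmem : Equiv.swap (0 : Fin n) j ∈ Gens n :=
      ⟨0, j, Or.inr rfl, fun e => hj e.symm, rfl⟩
    have h := (BS_adj_mul hmem 1).reachable
    rwa [one_mul] at h
  have hswap : ∀ σ : Equiv.Perm (Fin n), σ.IsSwap → σ ∈ R := by
    rintro σ ⟨x, y, hxy, rfl⟩
    by_cases hx0 : x = 0
    · subst hx0
      exact hstar y (fun e => hxy e.symm)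
    by_cases hy0 : y = 0
    · subst hy0
      rw [Equiv.swap_comm]
      exact hstar x hx0
    · have h1 := hstar x hx0
      have h2 := hstar y hy0
      have hkey : Equiv.swap x y = Equiv.swap 0 x * Equiv.swap 0 y * Equiv.swap 0 x := by
        have h3 := Equiv.swap_apply_apply (Equiv.swap (0 : Fin n) x) 0 y
        rw [Equiv.swap_apply_left] at h3
        rw [Equiv.swap_apply_of_ne_of_ne hy0 hxy.symm] at h3
        rw [Equiv.swap_inv] at h3
        exact h3
      rw [hkey]
      exact R.mul_mem (R.mul_mem h1 h2) h1
  have htop : (⊤ : Subgroup (Equiv.Perm (Fin n))) ≤ R := by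
    rw [← Equiv.Perm.closure_isSwap]
    exact (Subgroup.closure_le R).mpr hswap
  exact htop (Subgroup.mem_top f)

lemma reachable_transfer {V : Type*} {G H : SimpleGraph V}
    (h : ∀ {a b : V}, G.Adj a b → H.Reachable a b) {x y : V} (hr : G.Reachable x y) :
    H.Reachable x y := by
  obtain ⟨w⟩ := hr
  induction w with
  | nil => exact SimpleGraph.Reachable.refl _
  | cons ha p ih => exact (h ha).trans ih

lemma exists_good_walk {n : ℕ} (u s : Equiv.Perm (Fin n)) (hs : s ∈ Gens n)
    {F : Set (Sym2 (Equiv.Perm (Fin n)))} (hF : F.ncard < (Gens n).ncard) :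
    ∃ w : (BS n).Walk u (u * s), ∀ e ∈ w.edges, e ∉ F := by
  by_contra hcon
  push_neg at hcon
  have hch : ∀ g : (Gens n : Set (Equiv.Perm (Fin n))),
      ∃ e : F, (e : Sym2 (Equiv.Perm (Fin n))) ∈ (fam u s g.1 hs g.2).edges := by
    intro g
    obtain ⟨e, he, heF⟩ := hcon (fam u s g.1 hs g.2)
    exact ⟨⟨e, heF⟩, he⟩
  choose φ hφ using hch
  have hinj : Function.Injective φ := by
    intro g g' h
    by_contra hne
    have hne' : g.1 ≠ g'.1 := fun e => hne (Subtype.ext e)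
    exact fam_disjoint u s hs g.2 g'.2 hne' (hφ g) (by rw [h]; exact hφ g')
  have hle := Nat.card_le_card_of_injective φ hinj
  rw [Nat.card_coe_set_eq, Nat.card_coe_set_eq] at hle
  omega

lemma BS_delete_connected {n : ℕ} (hn : 3 ≤ n) {F : Set (Sym2 (Equiv.Perm (Fin n)))}
    (hF : F.ncard < 2 * n - 3) : ((BS n).deleteEdges F).Connected := by
  rw [SimpleGraph.connected_iff]
  haveI : NeZero n := ⟨by omega⟩
  refine ⟨?_, ⟨1⟩⟩
  have hadj : ∀ {a b : Equiv.Perm (Fin n)}, (BS n).Adj a b →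
      ((BS n).deleteEdges F).Reachable a b := by
    intro a b hab
    rw [BS_adj] at hab
    obtain ⟨g, hg, rfl⟩ := hab
    obtain ⟨w, hw⟩ := exists_good_walk a g hg
      (show F.ncard < (Gens n).ncard by rw [Gens_ncard hn]; omega)
    exact ⟨w.transfer _ (fun e he => by
      rw [SimpleGraph.edgeSet_deleteEdges]
      exact ⟨w.edges_subset_edgeSet he, hw e he⟩)⟩
  intro x y
  exact reachable_transfer hadj ((BS_reachable_one x).symm.trans (BS_reachable_one y))

lemma BS_not_connected_delete {n : ℕ} (hn : 3 ≤ n) :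
    ¬ ((BS n).deleteEdges ((BS n).incidenceSet 1)).Connected := by
  intro h
  haveI : NeZero n := ⟨by omega⟩
  have h01 : (0 : Fin n) ≠ 1 := by
    intro e
    have hv := congrArg Fin.val e
    rw [Fin.val_zero, Fin.val_one'] at hv
    rw [Nat.mod_eq_of_lt (by omega)] at hv
    omega
  have hx : Equiv.swap (0 : Fin n) 1 ≠ 1 := fun e => h01 (Equiv.swap_eq_one_iff.mp e)
  set σ := Equiv.swap (0 : Fin n) 1 with hσ
  obtain ⟨w⟩ := h.preconnected 1 σ
  clear_value σ
  cases w with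
  | nil => exact hx rfl
  | cons ha p =>
    rw [SimpleGraph.deleteEdges_adj] at ha
    exact ha.2 (((BS n).mem_incidenceSet _ _).mpr ha.1)

lemma BS_incidence_ncard {n : ℕ} (hn : 3 ≤ n) :
    ((BS n).incidenceSet 1).ncard = 2 * n - 3 := by
  have e1 : (BS n).neighborSet 1 = Gens n := by
    ext g
    simp only [SimpleGraph.mem_neighborSet, BS_adj]
    constructor
    · rintro ⟨h, hh, rfl⟩
      rwa [one_mul]
    · intro hg
      exact ⟨g, hg, (one_mul g).symm⟩
  rw [← Nat.card_coe_set_eq, Nat.card_congr ((BS n).incidenceSetEquivNeighborSet 1),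
    Nat.card_coe_set_eq, e1, Gens_ncard hn]

/-- For `n ≥ 3`, the edge connectivity of `BS_n` equals `2n - 3`. -/
theorem BS_edgeConnectivity (n : ℕ) (hn : 3 ≤ n) :
    edgeConnectivity (BS n) = 2 * n - 3 := by
  have hmem : (2 * n - 3) ∈ {k : ℕ | ∃ F : Set (Sym2 (Equiv.Perm (Fin n))),
      F ⊆ (BS n).edgeSet ∧ F.ncard = k ∧ ¬ ((BS n).deleteEdges F).Connected} :=
    ⟨(BS n).incidenceSet 1, (BS n).incidenceSet_subset 1, BS_incidence_ncard hn,
      BS_not_connected_delete hn⟩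
  refine le_antisymm (Nat.sInf_le hmem) (le_csInf ⟨_, hmem⟩ ?_)
  rintro k ⟨F, hsub, rfl, hnc⟩
  by_contra hlt
  push_neg at hlt
  exact hnc (BS_delete_connected hn hlt)
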